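/- Let δ, σ, q > 0 and α, β ∈ (0,1) with α + β < 1. Define λ(θ) := qδ − ((2δ+σ²)/(2δ))^{1−α} · (2δα/(2δ+σ²(1−α))) · θ^{α+β−1}, θ̂ := ((2δ+σ²)/(2δ))^{(1−α)/(1−α−β)} · ( 2(α+β)/(q(2δ+σ²(1−α))) )^{1/(1−α−β)}, â := (2δ/(2δ+σ²)) θ̂, and for a > 0 let p_a be the probability measure on (0,∞) with density p_a(dx) = ((2δ+σ²)/σ²) a^{2δ/σ²+1} x^{−2δ/σ²−2} 1_{x ≥ a} dx. Then λ(θ̂) = β θ̂^{β−1} · ∫_{(0,∞)} x^α p_{â}(dx); that is, the function x ↦ β θ̂^{β−1} x^α − λ(θ̂) has mean zero under p_{â}. -/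

import Mathlib

open MeasureTheory Set

/-- The stationary distribution of a geometric Brownian motion with drift `-δ` and
volatility `σ`, reflected upwards à la Skorohod at the level `a`: the measure on `(0,∞)`
with density `((2δ+σ²)/σ²) · a^(2δ/σ²+1) · x^(-2δ/σ²-2) · 1_{x ≥ a}`. -/
noncomputable def reflectedStationary (δ σ a : ℝ) : Measure ℝ :=
  volume.withDensity fun x =>
    ENNReal.ofReal
      (if a ≤ x then ((2 * δ + σ ^ 2) / σ ^ 2) * a ^ (2 * δ / σ ^ 2 + 1)
          * x ^ (-(2 * δ / σ ^ 2) - 2) else 0)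

open Real ProbabilityTheory
open scoped NNReal ENNReal

lemma reflected_eq_pareto (δ σ a : ℝ) (hσ : 0 < σ) :
    reflectedStationary δ σ a = ProbabilityTheory.paretoMeasure a (2 * δ / σ ^ 2 + 1) := by
  unfold reflectedStationary ProbabilityTheory.paretoMeasure
  congr 1
  funext x
  rw [ProbabilityTheory.paretoPDF_eq]
  have h2 : -(2 * δ / σ ^ 2) - 2 = -((2 * δ / σ ^ 2 + 1) + 1) := by ring
  have h1 : (2 * δ + σ ^ 2) / σ ^ 2 = 2 * δ / σ ^ 2 + 1 := by
    field_simp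
  rw [h2, h1]

lemma pareto_key (t r s : ℝ) (ht : 0 < t) (hr : 0 ≤ r) :
    (fun x => (paretoPDFReal t r x).toNNReal • x ^ s)
      = Set.indicator (Ici t) (fun x => r * t ^ r * (x ^ (-(r + 1)) * x ^ s)) := by
  funext x
  rw [NNReal.smul_def, smul_eq_mul,
    Real.coe_toNNReal _ (paretoPDFReal_nonneg ht.le hr x)]
  unfold paretoPDFReal
  by_cases hx : t ≤ x
  · rw [if_pos hx, Set.indicator_of_mem (mem_Ici.mpr hx)]; ring
  · rw [if_neg hx, Set.indicator_of_notMem (by simpa using hx), zero_mul]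

lemma integrable_rpow_pareto (t r s : ℝ) (ht : 0 < t) (hr : 0 < r) (hs : s < r) :
    Integrable (fun x : ℝ => x ^ s) (paretoMeasure t r) := by
  unfold paretoMeasure
  rw [show paretoPDF t r = fun x => (((paretoPDFReal t r x).toNNReal : ℝ≥0) : ℝ≥0∞) from rfl,
    integrable_withDensity_iff_integrable_smul
      (measurable_paretoPDFReal t r).real_toNNReal]
  rw [show (fun x => (paretoPDFReal t r x).toNNReal • x ^ s)
      = Set.indicator (Ici t) (fun x => r * t ^ r * (x ^ (-(r + 1)) * x ^ s))
      from pareto_key t r s ht hr.le]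
  rw [integrable_indicator_iff measurableSet_Ici]
  have h1 : IntegrableOn (fun x => r * t ^ r * x ^ (s - r - 1)) (Ici t) volume := by
    apply Integrable.const_mul
    exact (integrableOn_Ici_iff_integrableOn_Ioi).mpr
      (integrableOn_Ioi_rpow_of_lt (by linarith) ht)
  apply h1.congr_fun _ measurableSet_Ici
  intro x hx
  have hx0 : 0 < x := lt_of_lt_of_le ht hx
  dsimp only
  rw [← Real.rpow_add hx0, show s - r - 1 = -(r + 1) + s by ring]

lemma integral_rpow_pareto (t r s : ℝ) (ht : 0 < t) (hr : 0 < r) (hs : s < r) :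
    ∫ x, x ^ s ∂(paretoMeasure t r) = r / (r - s) * t ^ s := by
  unfold paretoMeasure
  rw [show paretoPDF t r = fun x => (((paretoPDFReal t r x).toNNReal : ℝ≥0) : ℝ≥0∞) from rfl,
    integral_withDensity_eq_integral_smul (measurable_paretoPDFReal t r).real_toNNReal,
    show (fun x => (paretoPDFReal t r x).toNNReal • x ^ s)
      = Set.indicator (Ici t) (fun x => r * t ^ r * (x ^ (-(r + 1)) * x ^ s))
      from pareto_key t r s ht hr.le,
    integral_indicator measurableSet_Ici, integral_Ici_eq_integral_Ioi]
  have h2 : ∫ x in Ioi t, r * t ^ r * (x ^ (-(r + 1)) * x ^ s)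
      = r * t ^ r * ∫ x in Ioi t, x ^ (s - r - 1) := by
    rw [← integral_const_mul]
    apply setIntegral_congr_fun measurableSet_Ioi
    intro x hx
    have hx0 : 0 < x := lt_trans ht hx
    dsimp only
    rw [← Real.rpow_add hx0, show -(r + 1) + s = s - r - 1 by ring]
  rw [h2, integral_Ioi_rpow_of_lt (by linarith) ht,
    show s - r - 1 + 1 = s - r by ring]
  have ht1 : t ^ r * t ^ (s - r) = t ^ s := by
    rw [← Real.rpow_add ht]; ring_nf
  have hrs : r - s ≠ 0 := by linarith
  have hsr : s - r ≠ 0 := by linarith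
  rw [← ht1]
  field_simp
  ring

theorem stmt_9 (δ σ q α β : ℝ) (hδ : 0 < δ) (hσ : 0 < σ) (hq : 0 < q)
    (hα0 : 0 < α) (hα1 : α < 1) (hβ0 : 0 < β) (hβ1 : β < 1) (hαβ : α + β < 1) :
    let lam : ℝ → ℝ := fun θ =>
      q * δ - ((2 * δ + σ ^ 2) / (2 * δ)) ^ (1 - α) *
        (2 * δ * α / (2 * δ + σ ^ 2 * (1 - α))) * θ ^ (α + β - 1)
    let θhat : ℝ :=
      ((2 * δ + σ ^ 2) / (2 * δ)) ^ ((1 - α) / (1 - α - β)) *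
        (2 * (α + β) / (q * (2 * δ + σ ^ 2 * (1 - α)))) ^ ((1 : ℝ) / (1 - α - β))
    let ahat : ℝ := (2 * δ / (2 * δ + σ ^ 2)) * θhat
    lam θhat = β * θhat ^ (β - 1) * ∫ x, x ^ α ∂(reflectedStationary δ σ ahat) ∧
      ∫ x, (β * θhat ^ (β - 1) * x ^ α - lam θhat) ∂(reflectedStationary δ σ ahat) = 0 := by
  intro lam θhat ahat
  have hσ2 : (0:ℝ) < σ ^ 2 := by positivity
  have h1α : (0:ℝ) < 1 - α := by linarith
  have hA : (0:ℝ) < 2 * δ + σ ^ 2 := by positivity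
  have hB : (0:ℝ) < 2 * δ + σ ^ 2 * (1 - α) := by positivity
  have hK : (0:ℝ) < (2 * δ + σ ^ 2) / (2 * δ) := by positivity
  have hM : (0:ℝ) < 2 * (α + β) / (q * (2 * δ + σ ^ 2 * (1 - α))) := by positivity
  have hE : (0:ℝ) < 1 - α - β := by linarith
  have hlam : lam θhat = q * δ - ((2 * δ + σ ^ 2) / (2 * δ)) ^ (1 - α) *
      (2 * δ * α / (2 * δ + σ ^ 2 * (1 - α))) * θhat ^ (α + β - 1) := rfl
  have hθdef : θhat = ((2 * δ + σ ^ 2) / (2 * δ)) ^ ((1 - α) / (1 - α - β)) *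
      (2 * (α + β) / (q * (2 * δ + σ ^ 2 * (1 - α)))) ^ ((1 : ℝ) / (1 - α - β)) := rfl
  have hadef : ahat = (2 * δ / (2 * δ + σ ^ 2)) * θhat := rfl
  have hθ : 0 < θhat := by rw [hθdef]; positivity
  have ha : 0 < ahat := by rw [hadef]; positivity
  have hν : (0:ℝ) < 2 * δ / σ ^ 2 := by positivity
  have hαr : α < 2 * δ / σ ^ 2 + 1 := by linarith
  have hint : ∫ x, x ^ α ∂(reflectedStationary δ σ ahat)
      = (2 * δ / σ ^ 2 + 1) / ((2 * δ / σ ^ 2 + 1) - α) * ahat ^ α := by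
    rw [reflected_eq_pareto δ σ ahat hσ]
    exact integral_rpow_pareto ahat _ α ha (by linarith) hαr
  -- rpow identities
  have hT : θhat ^ (α + β - 1) = ((2 * δ + σ ^ 2) / (2 * δ)) ^ (α - 1) *
      (q * (2 * δ + σ ^ 2 * (1 - α)) / (2 * (α + β))) := by
    rw [hθdef, Real.mul_rpow (Real.rpow_nonneg hK.le _) (Real.rpow_nonneg hM.le _),
      ← Real.rpow_mul hK.le, ← Real.rpow_mul hM.le,
      show (1 - α) / (1 - α - β) * (α + β - 1) = α - 1 by field_simp; ring,
      show (1:ℝ) / (1 - α - β) * (α + β - 1) = -1 by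
        rw [div_mul_eq_mul_div, div_eq_iff (by linarith : (1:ℝ) - α - β ≠ 0)]; ring,
      Real.rpow_neg_one, inv_div]
  have hBA : θhat ^ (β - 1) * ahat ^ α
      = (2 * δ / (2 * δ + σ ^ 2)) ^ α * θhat ^ (α + β - 1) := by
    rw [hadef, Real.mul_rpow (by positivity) hθ.le, mul_left_comm,
      ← Real.rpow_add hθ]
    ring_nf
  have hKK : ((2 * δ + σ ^ 2) / (2 * δ)) ^ (1 - α) * ((2 * δ + σ ^ 2) / (2 * δ)) ^ (α - 1)
      = 1 := by
    rw [← Real.rpow_add hK, show (1 - α) + (α - 1) = (0:ℝ) by ring, Real.rpow_zero]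
  have hpow1 : (2 * δ / (2 * δ + σ ^ 2)) ^ α * ((2 * δ + σ ^ 2) / (2 * δ)) ^ (α - 1)
      = 2 * δ / (2 * δ + σ ^ 2) := by
    rw [show 2 * δ / (2 * δ + σ ^ 2) = ((2 * δ + σ ^ 2) / (2 * δ))⁻¹ by rw [inv_div],
      Real.inv_rpow hK.le, ← Real.rpow_neg hK.le, ← Real.rpow_add hK,
      show -α + (α - 1) = (-1 : ℝ) by ring, Real.rpow_neg_one]
  have hαβ0 : (0:ℝ) < α + β := by linarith
  have hBne : 2 * δ + σ ^ 2 * (1 - α) ≠ 0 := ne_of_gt hB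
  have hAne : 2 * δ + σ ^ 2 ≠ 0 := ne_of_gt hA
  have hαβne : α + β ≠ 0 := ne_of_gt hαβ0
  have hσne : σ ≠ 0 := ne_of_gt hσ
  have hδne : δ ≠ 0 := ne_of_gt hδ
  have hL : lam θhat = q * δ * β / (α + β) := by
    rw [hlam, hT, show ((2 * δ + σ ^ 2) / (2 * δ)) ^ (1 - α) *
        (2 * δ * α / (2 * δ + σ ^ 2 * (1 - α))) *
        (((2 * δ + σ ^ 2) / (2 * δ)) ^ (α - 1) *
          (q * (2 * δ + σ ^ 2 * (1 - α)) / (2 * (α + β))))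
      = (((2 * δ + σ ^ 2) / (2 * δ)) ^ (1 - α) * ((2 * δ + σ ^ 2) / (2 * δ)) ^ (α - 1)) *
        ((2 * δ * α / (2 * δ + σ ^ 2 * (1 - α))) *
          (q * (2 * δ + σ ^ 2 * (1 - α)) / (2 * (α + β)))) by ring, hKK, one_mul]
    field_simp
    ring
  have hR : β * θhat ^ (β - 1) * ((2 * δ / σ ^ 2 + 1) / ((2 * δ / σ ^ 2 + 1) - α) * ahat ^ α)
      = q * δ * β / (α + β) := by
    rw [show β * θhat ^ (β - 1) *
        ((2 * δ / σ ^ 2 + 1) / ((2 * δ / σ ^ 2 + 1) - α) * ahat ^ α)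
      = β * ((2 * δ / σ ^ 2 + 1) / ((2 * δ / σ ^ 2 + 1) - α)) *
        (θhat ^ (β - 1) * ahat ^ α) by ring, hBA, hT,
      show (2 * δ / (2 * δ + σ ^ 2)) ^ α *
        (((2 * δ + σ ^ 2) / (2 * δ)) ^ (α - 1) *
          (q * (2 * δ + σ ^ 2 * (1 - α)) / (2 * (α + β))))
      = ((2 * δ / (2 * δ + σ ^ 2)) ^ α * ((2 * δ + σ ^ 2) / (2 * δ)) ^ (α - 1)) *
        (q * (2 * δ + σ ^ 2 * (1 - α)) / (2 * (α + β))) by ring, hpow1]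
    have hrα : (2 * δ / σ ^ 2 + 1) - α ≠ 0 := by
      have h0 : 0 < (2 * δ / σ ^ 2 + 1) - α := by linarith
      exact ne_of_gt h0
    have hratio : (2 * δ / σ ^ 2 + 1) / ((2 * δ / σ ^ 2 + 1) - α)
        = (2 * δ + σ ^ 2) / (2 * δ + σ ^ 2 * (1 - α)) := by
      rw [div_eq_div_iff hrα hBne]
      field_simp
      try ring
      try exact Or.inl trivial
    rw [hratio]
    field_simp
  have goal1 : lam θhat = β * θhat ^ (β - 1) * ∫ x, x ^ α ∂(reflectedStationary δ σ ahat) := by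
    rw [hint, hL, hR]
  refine ⟨goal1, ?_⟩
  have hprob : IsProbabilityMeasure (reflectedStationary δ σ ahat) := by
    rw [reflected_eq_pareto δ σ ahat hσ]
    exact isProbabilityMeasure_paretoMeasure ha (by linarith)
  have hintg : Integrable (fun x : ℝ => x ^ α) (reflectedStationary δ σ ahat) := by
    rw [reflected_eq_pareto δ σ ahat hσ]
    exact integrable_rpow_pareto ahat _ α ha (by linarith) hαr
  rw [integral_sub (hintg.const_mul _) (integrable_const _), integral_const_mul,
    integral_const, probReal_univ]
  simp only [ENNReal.toReal_one, one_smul]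
  rw [← goal1, sub_self]
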